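/- Let a_1,…,a_n be positive integers with ∑ a_i = 2b, and let G' be the graph with nodes {w_0,…,w_n} ∪ {v_1,…,v_n} where for each i there is an edge (w_{i-1},w_i) with delay a_i and edges (w_{i-1},v_i),(v_i,w_i) with delay 0, all of capacity 1. Then there exists a feasible flow of rate R = 2 from w_0 to w_n with maximum delay D(f) ≤ b if and only if {a_1,…,a_n} admits a partition into two sets each summing to b; moreover, whenever such a flow exists, every flow-carrying path of the flow has delay exactly b. -/

import Mathlib

/-- A directed network: each edge has a source node, a destination node,
a non-negative integer capacity and a non-negative integer delay. -/
structure Network (V : Type) (E : Type) where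
  src : E → V
  dst : E → V
  cap : E → ℕ
  delay : E → ℕ

namespace Network

variable {V E : Type}

/-- `N.IsPath s t p` : the list of edges `p` forms a directed path from `s` to `t`. -/
def IsPath (N : Network V E) : V → V → List E → Prop
  | s, t, [] => s = t
  | s, t, e :: es => N.src e = s ∧ N.IsPath (N.dst e) t es

/-- The delay of a path: the sum of the delays of its edges. -/
def pathDelay (N : Network V E) (p : List E) : ℕ := (p.map N.delay).sum

end Network

/-- A (path-based) flow from `s` to `t`: a finitely-supported assignment of
non-negative rates to `s`–`t` paths. -/
structure PathFlow {V E : Type} (N : Network V E) (s t : V) where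
  f : List E →₀ ℝ
  nonneg : ∀ p, 0 ≤ f p
  isPath : ∀ p ∈ f.support, N.IsPath s t p

namespace PathFlow

variable {V E : Type} [DecidableEq E] {N : Network V E} {s t : V}

/-- Total rate of the flow. -/
noncomputable def totalRate (F : PathFlow N s t) : ℝ := ∑ p ∈ F.f.support, F.f p

/-- Rate carried by edge `e`: the sum of the rates of all paths containing `e`. -/
noncomputable def edgeRate (F : PathFlow N s t) (e : E) : ℝ :=
  ∑ p ∈ F.f.support, if e ∈ p then F.f p else 0

/-- Feasibility with rate `R`: total rate is `R` and every edge capacity is respected. -/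
def Feasible (F : PathFlow N s t) (R : ℝ) : Prop :=
  F.totalRate = R ∧ ∀ e, F.edgeRate e ≤ (N.cap e : ℝ)

/-- The maximum delay over flow-carrying paths. -/
def maxDelay (F : PathFlow N s t) : ℕ := F.f.support.sup N.pathDelay

/-- An integer flow assigns a non-negative integer rate to every path. -/
def IsInteger (F : PathFlow N s t) : Prop := ∀ p, ∃ m : ℕ, F.f p = (m : ℝ)

end PathFlow
/-- Nodes of the partition-reduction graph `G'`: `Sum.inl i` is `w_i` (`i = 0,…,n`),
`Sum.inr i` is `v_{i+1}` (`i = 0,…,n-1`). -/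
abbrev GV (n : ℕ) := Fin (n + 1) ⊕ Fin n

/-- Edges of `G'`: `Sum.inl i` is the direct edge `(w_i, w_{i+1})` of delay `a i`;
`Sum.inr (Sum.inl i)` is `(w_i, v_{i+1})` and `Sum.inr (Sum.inr i)` is `(v_{i+1}, w_{i+1})`,
both of delay `0`. All edges have capacity `1`. -/
abbrev GE (n : ℕ) := Fin n ⊕ (Fin n ⊕ Fin n)

/-- The graph `G'` reduced from the partition problem. -/
def Gpart (n : ℕ) (a : Fin n → ℕ) : Network (GV n) (GE n) where
  src
    | Sum.inl i => Sum.inl i.castSucc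
    | Sum.inr (Sum.inl i) => Sum.inl i.castSucc
    | Sum.inr (Sum.inr i) => Sum.inr i
  dst
    | Sum.inl i => Sum.inl i.succ
    | Sum.inr (Sum.inl i) => Sum.inr i
    | Sum.inr (Sum.inr i) => Sum.inl i.succ
  cap := fun _ => 1
  delay
    | Sum.inl i => a i
    | Sum.inr _ => 0

section Aux

/-- One segment of a canonical path: direct edge if `i ∈ S`, else the detour. -/
def seg (n : ℕ) (S : Finset (Fin n)) (i : Fin n) : List (GE n) :=
  if i ∈ S then [Sum.inl i] else [Sum.inr (Sum.inl i), Sum.inr (Sum.inr i)]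

/-- The canonical path determined by `S`, starting at `w_j`. -/
def cpath (n : ℕ) (S : Finset (Fin n)) (j : ℕ) : List (GE n) :=
  ((List.finRange n).drop j).flatMap (seg n S)

variable {n : ℕ} {a : Fin n → ℕ}

instance GE.decMem {n : ℕ} (x : GE n) (p : List (GE n)) : Decidable (x ∈ p) :=
  decidable_of_iff (∃ y ∈ p, y = x) (by simp)


@[simp] lemma Gpart_src_inl (i : Fin n) :
    (Gpart n a).src (Sum.inl i) = Sum.inl i.castSucc := rfl
@[simp] lemma Gpart_src_inrl (i : Fin n) :
    (Gpart n a).src (Sum.inr (Sum.inl i)) = Sum.inl i.castSucc := rfl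
@[simp] lemma Gpart_src_inrr (i : Fin n) :
    (Gpart n a).src (Sum.inr (Sum.inr i)) = Sum.inr i := rfl
@[simp] lemma Gpart_dst_inl (i : Fin n) :
    (Gpart n a).dst (Sum.inl i) = Sum.inl i.succ := rfl
@[simp] lemma Gpart_dst_inrl (i : Fin n) :
    (Gpart n a).dst (Sum.inr (Sum.inl i)) = Sum.inr i := rfl
@[simp] lemma Gpart_dst_inrr (i : Fin n) :
    (Gpart n a).dst (Sum.inr (Sum.inr i)) = Sum.inl i.succ := rfl
@[simp] lemma Gpart_delay_inl (i : Fin n) :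
    (Gpart n a).delay (Sum.inl i) = a i := rfl
@[simp] lemma Gpart_delay_inr (e : Fin n ⊕ Fin n) :
    (Gpart n a).delay (Sum.inr e) = 0 := rfl
@[simp] lemma Gpart_cap (e : GE n) : (Gpart n a).cap e = 1 := rfl

lemma mem_drop_finRange {k : ℕ} {x : Fin n} :
    x ∈ (List.finRange n).drop k ↔ k ≤ x.val := by
  constructor
  · intro h
    rw [List.mem_iff_getElem] at h
    obtain ⟨m, hm, he⟩ := h
    rw [List.getElem_drop, List.getElem_finRange] at he
    have := congrArg Fin.val he
    simp at this
    omega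
  · intro h
    have hx := x.isLt
    rw [List.mem_iff_getElem]
    refine ⟨x.val - k, by simp; omega, ?_⟩
    rw [List.getElem_drop, List.getElem_finRange]
    ext
    simp
    omega

lemma cpath_nil {j : ℕ} (h : n ≤ j) (S : Finset (Fin n)) : cpath n S j = [] := by
  unfold cpath
  rw [List.drop_eq_nil_of_le (by simpa using h)]
  rfl

lemma cpath_succ (S : Finset (Fin n)) {j : ℕ} (h : j < n) :
    cpath n S j = seg n S ⟨j, h⟩ ++ cpath n S (j + 1) := by
  unfold cpath
  rw [List.drop_eq_getElem_cons (by simpa using h), List.flatMap_cons]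
  congr 2
  rw [List.getElem_finRange]
  ext; simp

lemma flatMap_congr' {α β : Type*} {l : List α} {f g : α → List β}
    (h : ∀ x ∈ l, f x = g x) : l.flatMap f = l.flatMap g := by
  induction l with
  | nil => rfl
  | cons y ys ih =>
      rw [List.flatMap_cons, List.flatMap_cons, h y List.mem_cons_self,
        ih fun x hx => h x (List.mem_cons_of_mem _ hx)]

lemma cpath_congr {S S' : Finset (Fin n)} (i : Fin n)
    (h : ∀ x : Fin n, x ≠ i → (x ∈ S ↔ x ∈ S')) {j : ℕ} (hij : i.val < j) :
    cpath n S j = cpath n S' j := by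
  unfold cpath
  apply flatMap_congr'
  intro x hx
  have hge := mem_drop_finRange.mp hx
  have hne : x ≠ i := by intro he; subst he; omega
  unfold seg
  by_cases hxS : x ∈ S
  · rw [if_pos hxS, if_pos ((h x hne).mp hxS)]
  · rw [if_neg hxS, if_neg (fun c => hxS ((h x hne).mpr c))]

lemma isPath_append {V E : Type} (N : Network V E) {s m t : V} {p q : List E}
    (hp : N.IsPath s m p) (hq : N.IsPath m t q) : N.IsPath s t (p ++ q) := by
  induction p generalizing s with
  | nil => cases hp; simpa using hq
  | cons e es ih => exact ⟨hp.1, ih hp.2⟩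

lemma isPath_cpath (a : Fin n → ℕ) (S : Finset (Fin n)) :
    ∀ (m j : ℕ) (hj : j + m = n),
      (Gpart n a).IsPath (Sum.inl ⟨j, by omega⟩) (Sum.inl (Fin.last n)) (cpath n S j) := by
  intro m
  induction m with
  | zero =>
      intro j hj
      rw [cpath_nil (by omega)]
      show Sum.inl _ = Sum.inl _
      congr 1
      ext
      simpa using hj
  | succ m ih =>
      intro j hj
      have hjn : j < n := by omega
      rw [cpath_succ S hjn]
      apply isPath_append (N := Gpart n a)
        (m := Sum.inl (⟨j + 1, by omega⟩ : Fin (n + 1)))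
      · unfold seg
        by_cases hi : (⟨j, hjn⟩ : Fin n) ∈ S <;> simp only [hi, if_true, if_false]
        · exact ⟨rfl, rfl⟩
        · exact ⟨rfl, rfl, rfl⟩
      · exact ih (j + 1) (by omega)

lemma exists_cpath (a : Fin n → ℕ) :
    ∀ (m j : ℕ) (hj : j + m = n) (p : List (GE n)),
      (Gpart n a).IsPath (Sum.inl ⟨j, by omega⟩) (Sum.inl (Fin.last n)) p →
      ∃ S : Finset (Fin n), p = cpath n S j := by
  intro m
  induction m with
  | zero =>
      intro j hj p hp
      rcases p with _ | ⟨e, es⟩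
      · exact ⟨∅, (cpath_nil (by omega) ∅).symm⟩
      · exfalso
        rcases e with i | ei
        · have h1 := hp.1
          simp only [Gpart_src_inl] at h1
          have := congrArg Fin.val (Sum.inl.inj h1)
          have hlt := i.isLt
          simp at this
          omega
        · rcases ei with i | i
          · have h1 := hp.1
            simp only [Gpart_src_inrl] at h1
            have := congrArg Fin.val (Sum.inl.inj h1)
            have hlt := i.isLt
            simp at this
            omega
          · have h1 := hp.1
            simp only [Gpart_src_inrr] at h1
            exact absurd h1 (by simp)
  | succ m ih =>
      intro j hj p hp
      have hjn : j < n := by omega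
      rcases p with _ | ⟨e, es⟩
      · exfalso
        have : (Sum.inl (⟨j, by omega⟩ : Fin (n+1)) : GV n) = Sum.inl (Fin.last n) := hp
        have := congrArg Fin.val (Sum.inl.inj this)
        simp [Fin.last] at this
        omega
      · obtain ⟨h1, h2⟩ := hp
        rcases e with i | ei
        · simp only [Gpart_src_inl] at h1
          have hi : i = ⟨j, hjn⟩ := by
            have := congrArg Fin.val (Sum.inl.inj h1)
            exact Fin.ext (by simpa using this)
          subst hi
          obtain ⟨S', hS'⟩ := ih (j + 1) (by omega) es h2
          refine ⟨insert ⟨j, hjn⟩ S', ?_⟩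
          rw [cpath_succ _ hjn, hS',
            cpath_congr (S := insert ⟨j, hjn⟩ S') (S' := S') ⟨j, hjn⟩
              (fun x hx => by simp [Finset.mem_insert, hx]) (by simp),
            seg, if_pos (Finset.mem_insert_self _ _)]
          rfl
        · rcases ei with i | i
          · simp only [Gpart_src_inrl] at h1
            have hi : i = ⟨j, hjn⟩ := by
              have := congrArg Fin.val (Sum.inl.inj h1)
              exact Fin.ext (by simpa using this)
            subst hi
            simp only [Gpart_dst_inrl] at h2
            rcases es with _ | ⟨e2, es2⟩
            · exact absurd h2 (by simp [Network.IsPath])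
            · obtain ⟨h3, h4⟩ := h2
              rcases e2 with i2 | ei2
              · simp only [Gpart_src_inl] at h3
                exact absurd h3 (by simp)
              · rcases ei2 with i2 | i2
                · simp only [Gpart_src_inrl] at h3
                  exact absurd h3 (by simp)
                · simp only [Gpart_src_inrr] at h3
                  have hi2 : i2 = ⟨j, hjn⟩ := Sum.inr.inj h3
                  subst hi2
                  simp only [Gpart_dst_inrr] at h4
                  obtain ⟨S', hS'⟩ := ih (j + 1) (by omega) es2 h4
                  refine ⟨S'.erase ⟨j, hjn⟩, ?_⟩
                  rw [cpath_succ _ hjn, hS',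
                    cpath_congr (S := S'.erase ⟨j, hjn⟩) (S' := S') ⟨j, hjn⟩
                      (fun x hx => by simp [Finset.mem_erase, hx]) (by simp),
                    seg, if_neg (Finset.notMem_erase _ _)]
                  rfl
          · simp only [Gpart_src_inrr] at h1
            exact absurd h1 (by simp)

lemma pathDelay_append (N : Network (GV n) (GE n)) (p q : List (GE n)) :
    N.pathDelay (p ++ q) = N.pathDelay p + N.pathDelay q := by
  simp [Network.pathDelay]

lemma pathDelay_seg (a : Fin n → ℕ) (S : Finset (Fin n)) (i : Fin n) :
    (Gpart n a).pathDelay (seg n S i) = if i ∈ S then a i else 0 := by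
  unfold seg
  split <;> simp [Network.pathDelay]

lemma pathDelay_cpath (a : Fin n → ℕ) (S : Finset (Fin n)) :
    (Gpart n a).pathDelay (cpath n S 0) = ∑ i ∈ S, a i := by
  have key : ∀ l : List (Fin n),
      (Gpart n a).pathDelay (l.flatMap (seg n S))
        = (l.map (fun i => if i ∈ S then a i else 0)).sum := by
    intro l
    induction l with
    | nil => simp [Network.pathDelay]
    | cons x xs ih =>
        rw [List.flatMap_cons, pathDelay_append, ih, pathDelay_seg, List.map_cons,
          List.sum_cons]
  unfold cpath
  rw [List.drop_zero, key, ← Fin.sum_univ_def, Finset.sum_ite_mem, Finset.univ_inter]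

lemma mem_cpath_inl {S : Finset (Fin n)} {i : Fin n} :
    Sum.inl i ∈ cpath n S 0 ↔ i ∈ S := by
  simp only [cpath, List.drop_zero, List.mem_flatMap]
  constructor
  · rintro ⟨x, -, hx⟩
    unfold seg at hx
    split at hx <;> simp_all
  · intro h
    exact ⟨i, List.mem_finRange i, by simp [seg, h]⟩

lemma mem_cpath_inrl {S : Finset (Fin n)} {i : Fin n} :
    Sum.inr (Sum.inl i) ∈ cpath n S 0 ↔ i ∉ S := by
  simp only [cpath, List.drop_zero, List.mem_flatMap]
  constructor
  · rintro ⟨x, -, hx⟩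
    unfold seg at hx
    split at hx <;> simp_all
  · intro h
    exact ⟨i, List.mem_finRange i, by simp [seg, h]⟩

lemma mem_cpath_inrr {S : Finset (Fin n)} {i : Fin n} :
    Sum.inr (Sum.inr i) ∈ cpath n S 0 ↔ i ∉ S := by
  simp only [cpath, List.drop_zero, List.mem_flatMap]
  constructor
  · rintro ⟨x, -, hx⟩
    unfold seg at hx
    split at hx <;> simp_all
  · intro h
    exact ⟨i, List.mem_finRange i, by simp [seg, h]⟩

lemma isPath_cpath0 (a : Fin n → ℕ) (S : Finset (Fin n)) :
    (Gpart n a).IsPath (Sum.inl 0) (Sum.inl (Fin.last n)) (cpath n S 0) :=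
  isPath_cpath a S n 0 (by omega)

lemma exists_cpath0 (a : Fin n → ℕ) (p : List (GE n))
    (hp : (Gpart n a).IsPath (Sum.inl 0) (Sum.inl (Fin.last n)) p) :
    ∃ S : Finset (Fin n), p = cpath n S 0 :=
  exists_cpath a n 0 (by omega) p hp

lemma totalRate_mk {V E : Type} [DecidableEq E] {N : Network V E} {s t : V}
    (f : List E →₀ ℝ) (h1 : ∀ p, 0 ≤ f p) (h2 : ∀ p ∈ f.support, N.IsPath s t p) :
    (PathFlow.mk f h1 h2 : PathFlow N s t).totalRate = ∑ p ∈ f.support, f p := rfl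

lemma edgeRate_mk {V E : Type} [DecidableEq E] {N : Network V E} {s t : V}
    (f : List E →₀ ℝ) (h1 : ∀ p, 0 ≤ f p) (h2 : ∀ p ∈ f.support, N.IsPath s t p)
    (e : E) :
    (PathFlow.mk f h1 h2 : PathFlow N s t).edgeRate e
      = ∑ p ∈ f.support, if e ∈ p then f p else 0 := rfl

lemma maxDelay_mk {V E : Type} [DecidableEq E] {N : Network V E} {s t : V}
    (f : List E →₀ ℝ) (h1 : ∀ p, 0 ≤ f p) (h2 : ∀ p ∈ f.support, N.IsPath s t p) :
    (PathFlow.mk f h1 h2 : PathFlow N s t).maxDelay = f.support.sup N.pathDelay := rfl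

end Aux

lemma gpart_delay_eq (n b : ℕ) (a : Fin n → ℕ)
    (hsum : ∑ i, a i = 2 * b)
    (F : PathFlow (Gpart n a) (Sum.inl 0) (Sum.inl (Fin.last n)))
    (hF : F.Feasible 2) (hD : F.maxDelay ≤ b) :
    ∀ p ∈ F.f.support, (Gpart n a).pathDelay p = b := by
  obtain ⟨hR, hcap⟩ := hF
  have hdec : ∀ p ∈ F.f.support, ∃ S, p = cpath n S 0 := fun p hp =>
    exists_cpath0 a p (F.isPath p hp)
  have hcut : ∀ i : Fin n,
      F.edgeRate (Sum.inl i) + F.edgeRate (Sum.inr (Sum.inl i)) = 2 := by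
    intro i
    unfold PathFlow.edgeRate
    rw [← Finset.sum_add_distrib, ← hR]
    refine Finset.sum_congr rfl fun p hp => ?_
    obtain ⟨S, hpS⟩ := hdec p hp
    subst hpS
    by_cases hi : i ∈ S
    · rw [if_pos (mem_cpath_inl.mpr hi),
        if_neg (fun h => (mem_cpath_inrl.mp h) hi), add_zero]
    · rw [if_neg (fun h => hi (mem_cpath_inl.mp h)),
        if_pos (mem_cpath_inrl.mpr hi), zero_add]
  have hge : ∀ i : Fin n, (1:ℝ) ≤ F.edgeRate (Sum.inl i) := by
    intro i
    have h1 := hcut i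
    have h2 := hcap (Sum.inr (Sum.inl i))
    rw [Gpart_cap] at h2
    push_cast at h2
    linarith
  have hdle : ∀ p ∈ F.f.support, ((Gpart n a).pathDelay p : ℝ) ≤ (b : ℝ) := by
    intro p hp
    exact_mod_cast Nat.cast_le.mpr (le_trans (Finset.le_sup hp) hD)
  have hdel : ∀ p ∈ F.f.support, ((Gpart n a).pathDelay p : ℝ)
      = ∑ i : Fin n, (if (Sum.inl i : GE n) ∈ p then (a i : ℝ) else 0) := by
    intro p hp
    obtain ⟨S, rfl⟩ := hdec p hp
    rw [pathDelay_cpath]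
    simp only [mem_cpath_inl]
    rw [Finset.sum_ite_mem, Finset.univ_inter]
    push_cast
    rfl
  set T : ℝ := ∑ p ∈ F.f.support, F.f p * ((Gpart n a).pathDelay p : ℝ) with hT
  have hT1 : T = ∑ i : Fin n, (a i : ℝ) * F.edgeRate (Sum.inl i) := by
    have step1 : ∀ p ∈ F.f.support, F.f p * (((Gpart n a).pathDelay p : ℕ) : ℝ)
        = ∑ i : Fin n, (if (Sum.inl i : GE n) ∈ p then (a i : ℝ) * F.f p else 0) := by
      intro p hp
      rw [hdel p hp, Finset.mul_sum]
      refine Finset.sum_congr rfl fun i _ => ?_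
      by_cases h : (Sum.inl i : GE n) ∈ p <;> simp [h, mul_comm]
    rw [hT, Finset.sum_congr rfl step1, Finset.sum_comm]
    refine Finset.sum_congr rfl fun i _ => ?_
    unfold PathFlow.edgeRate
    rw [Finset.mul_sum]
    refine Finset.sum_congr rfl fun p _ => ?_
    by_cases h : (Sum.inl i : GE n) ∈ p <;> simp [h, mul_comm]
  have hTge : (2:ℝ) * (b:ℝ) ≤ T := by
    rw [hT1]
    have h2b : (2:ℝ) * (b:ℝ) = ∑ i : Fin n, (a i : ℝ) := by
      have : ((∑ i, a i : ℕ) : ℝ) = ∑ i : Fin n, (a i : ℝ) := by push_cast; rfl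
      rw [← this, hsum]
      push_cast
      ring
    rw [h2b]
    refine Finset.sum_le_sum fun i _ => ?_
    calc (a i : ℝ) = (a i : ℝ) * 1 := by ring
    _ ≤ (a i : ℝ) * F.edgeRate (Sum.inl i) :=
      mul_le_mul_of_nonneg_left (hge i) (Nat.cast_nonneg _)
  have hTle : T ≤ 2 * (b:ℝ) := by
    rw [hT]
    calc ∑ p ∈ F.f.support, F.f p * ((Gpart n a).pathDelay p : ℝ)
        ≤ ∑ p ∈ F.f.support, F.f p * (b:ℝ) :=
          Finset.sum_le_sum fun p hp =>
            mul_le_mul_of_nonneg_left (hdle p hp) (F.nonneg p)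
    _ = (∑ p ∈ F.f.support, F.f p) * (b:ℝ) := by rw [Finset.sum_mul]
    _ = 2 * (b:ℝ) := by
        rw [show (∑ p ∈ F.f.support, F.f p) = F.totalRate from rfl, hR]
  have hTeq : T = 2 * (b:ℝ) := le_antisymm hTle hTge
  have hzero : ∑ p ∈ F.f.support, F.f p * ((b:ℝ) - ((Gpart n a).pathDelay p : ℝ)) = 0 := by
    have hexp : ∑ p ∈ F.f.support, F.f p * ((b:ℝ) - ((Gpart n a).pathDelay p : ℝ))
        = (∑ p ∈ F.f.support, F.f p) * (b:ℝ) - T := by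
      rw [hT, Finset.sum_mul, ← Finset.sum_sub_distrib]
      exact Finset.sum_congr rfl fun p _ => by ring
    rw [hexp, show (∑ p ∈ F.f.support, F.f p) = F.totalRate from rfl, hR, hTeq]
    ring
  intro p hp
  have hnn : ∀ q ∈ F.f.support, 0 ≤ F.f q * ((b:ℝ) - ((Gpart n a).pathDelay q : ℝ)) :=
    fun q hq => mul_nonneg (F.nonneg q) (by have := hdle q hq; linarith)
  have h0 := (Finset.sum_eq_zero_iff_of_nonneg hnn).mp hzero p hp
  have hfp : F.f p ≠ 0 := Finsupp.mem_support_iff.mp hp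
  rcases mul_eq_zero.mp h0 with h | h
  · exact absurd h hfp
  · have : ((Gpart n a).pathDelay p : ℝ) = (b:ℝ) := by linarith
    exact_mod_cast this

/-- **Full reduction correctness for Theorem 1 (NP-completeness of Min-Max-Delay).**
For `n ≥ 1` and positive integers `a i` summing to `2 b`: there is a feasible flow of rate
`R = 2` from `w₀` to `wₙ` in `G'` with maximum delay `D(f) ≤ b` if and only if the `a i`
can be partitioned into two sets each summing to `b`; moreover, whenever such a flow
exists, every flow-carrying path of the flow has delay exactly `b`. -/
theorem gpart_reduction_correct (n b : ℕ) (hn : 1 ≤ n) (a : Fin n → ℕ)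
    (ha : ∀ i, 0 < a i) (hsum : ∑ i, a i = 2 * b) :
    ((∃ F : PathFlow (Gpart n a) (Sum.inl 0) (Sum.inl (Fin.last n)),
        F.Feasible 2 ∧ F.maxDelay ≤ b) ↔
      ∃ S : Finset (Fin n), ∑ i ∈ S, a i = b ∧ ∑ i ∈ Sᶜ, a i = b) ∧
    (∀ F : PathFlow (Gpart n a) (Sum.inl 0) (Sum.inl (Fin.last n)),
      F.Feasible 2 → F.maxDelay ≤ b →
      ∀ p ∈ F.f.support, (Gpart n a).pathDelay p = b) := by
  constructor
  · constructor
    · rintro ⟨F, hF, hD⟩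
      have key := gpart_delay_eq n b a hsum F hF hD
      have hne : F.f.support.Nonempty := by
        rw [Finset.nonempty_iff_ne_empty]
        intro h
        have h2 := hF.1
        unfold PathFlow.totalRate at h2
        rw [h, Finset.sum_empty] at h2
        norm_num at h2
      obtain ⟨p, hp⟩ := hne
      obtain ⟨S, rfl⟩ := exists_cpath0 a p (F.isPath p hp)
      have h1 := key _ hp
      rw [pathDelay_cpath] at h1
      have h2 := Finset.sum_add_sum_compl S a
      exact ⟨S, h1, by omega⟩
    · rintro ⟨S, hS1, hS2⟩
      have hb : 0 < b := by
        have hpos : 0 < ∑ i, a i :=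
          Finset.sum_pos (fun i _ => ha i) ⟨⟨0, hn⟩, Finset.mem_univ _⟩
        omega
      have hSne : S.Nonempty := by
        rcases S.eq_empty_or_nonempty with h | h
        · exfalso; rw [h, Finset.sum_empty] at hS1; omega
        · exact h
      obtain ⟨i0, hi0⟩ := hSne
      set p1 := cpath n S 0 with hp1d
      set p2 := cpath n Sᶜ 0 with hp2d
      have hp12 : p1 ≠ p2 := by
        intro h
        rw [hp1d, hp2d] at h
        have h1 : (Sum.inl i0 : GE n) ∈ cpath n S 0 := mem_cpath_inl.mpr hi0
        rw [h] at h1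
        exact (Finset.mem_compl.mp (mem_cpath_inl.mp h1)) hi0
      set f0 : List (GE n) →₀ ℝ := Finsupp.single p1 1 + Finsupp.single p2 1 with hf0
      have happ1 : f0 p1 = 1 := by
        rw [hf0, Finsupp.add_apply, Finsupp.single_apply, Finsupp.single_apply,
          if_pos rfl, if_neg fun h => hp12 h.symm]
        norm_num
      have happ2 : f0 p2 = 1 := by
        rw [hf0, Finsupp.add_apply, Finsupp.single_apply, Finsupp.single_apply,
          if_pos rfl, if_neg hp12]
        norm_num
      have hsupp : f0.support = {p1, p2} := by
        rw [hf0, Finsupp.support_add_eq (by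
          rw [Finsupp.support_single_ne_zero _ one_ne_zero,
            Finsupp.support_single_ne_zero _ one_ne_zero]
          simp [hp12, Ne.symm hp12]), Finsupp.support_single_ne_zero _ one_ne_zero,
          Finsupp.support_single_ne_zero _ one_ne_zero]
        ext x
        simp
      refine ⟨⟨f0, ?_, ?_⟩, ⟨?_, ?_⟩, ?_⟩
      · intro p
        rw [hf0, Finsupp.add_apply, Finsupp.single_apply, Finsupp.single_apply]
        split <;> split <;> norm_num
      · intro p hp
        rw [hsupp] at hp
        rcases Finset.mem_insert.mp hp with h | h
        · subst h; exact isPath_cpath0 a S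
        · rw [Finset.mem_singleton] at h; subst h; exact isPath_cpath0 a Sᶜ
      · rw [totalRate_mk, hsupp, Finset.sum_insert (by simp [hp12, Ne.symm hp12]), Finset.sum_singleton,
          happ1, happ2]
        norm_num
      · intro e
        rw [edgeRate_mk, hsupp, Finset.sum_insert (by simp [hp12, Ne.symm hp12]), Finset.sum_singleton, Gpart_cap]
        rcases e with i | i | i <;> by_cases hi : i ∈ S <;>
          simp [happ1, happ2, show f0 (cpath n S 0) = 1 from happ1,
            show f0 (cpath n Sᶜ 0) = 1 from happ2, hp1d, hp2d, mem_cpath_inl, mem_cpath_inrl,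
            mem_cpath_inrr, hi]
      · rw [maxDelay_mk, hsupp, Finset.sup_insert, Finset.sup_singleton, hp1d, hp2d,
          pathDelay_cpath, pathDelay_cpath, hS1, hS2]
        simp
  · exact fun F hF hD => gpart_delay_eq n b a hsum F hF hD
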